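/- Let G be a countable discrete group, C*_r(G) ⊆ B(ℓ²(G)) the reduced group C*-algebra generated by the left-translation unitaries λ_g, and j(a)(γ) = ⟨δ_γ, a δ_e⟩. Then for all a, b ∈ C*_r(G) and every γ ∈ G, the family η ↦ j(a)(η) · j(b)(η⁻¹γ) over η ∈ G is unconditionally summable in ℂ (equivalently, absolutely summable), and j(a b)(γ) = ∑_{η∈G} j(a)(η) · j(b)(η⁻¹γ), where a b is the composition of the operators a and b. -/

import Mathlib

/-- The element `j(a)(γ) = ⟨δ_γ, a δ_e⟩` of the ℓ²-matrix-coefficient map, for a bounded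
operator `a` on `ℓ²(G)`.  The inner product is conjugate-linear in the first variable. -/
noncomputable def jmap {G : Type*} [Group G] [DecidableEq G]
    (a : lp (fun _ : G => ℂ) 2 →L[ℂ] lp (fun _ : G => ℂ) 2) (γ : G) : ℂ :=
  inner (𝕜 := ℂ) (lp.single 2 γ (1 : ℂ)) (a (lp.single 2 (1 : G) (1 : ℂ)))

/-- The reduced group C*-algebra: the operator-norm closure of the ∗-subalgebra of
bounded operators on `ℓ²(G)` generated by the left-translation unitaries. -/
noncomputable def reducedGroupCStarAlgebra {G : Type*} [Group G]
    (lam : G → (lp (fun _ : G => ℂ) 2 →L[ℂ] lp (fun _ : G => ℂ) 2)) :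
    StarSubalgebra ℂ (lp (fun _ : G => ℂ) 2 →L[ℂ] lp (fun _ : G => ℂ) 2) :=
  (StarAlgebra.adjoin ℂ (Set.range lam)).topologicalClosure

set_option linter.unusedSectionVars false

namespace JmapAux

open scoped ENNReal

variable {G : Type*} [Group G] [DecidableEq G]

lemma memℓp_comp (f : lp (fun _ : G => ℂ) 2) (e : G ≃ G) :
    Memℓp (fun x => f (e x)) 2 := by
  apply memℓp_gen
  have h : Summable fun i => ‖f i‖ ^ (2 : ℝ≥0∞).toReal :=
    (memℓp_gen_iff (by norm_num)).1 f.prop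
  exact e.summable_iff.2 h

/-- Right translation `ρ_g f x = f (x g⁻¹)` as a linear isometry of `ℓ²(G)`. -/
noncomputable def rhoLI (g : G) :
    lp (fun _ : G => ℂ) 2 →ₗᵢ[ℂ] lp (fun _ : G => ℂ) 2 where
  toLinearMap :=
    { toFun := fun f => ⟨fun x => f (x * g⁻¹), memℓp_comp f (Equiv.mulRight g⁻¹)⟩
      map_add' := fun f h => rfl
      map_smul' := fun c f => rfl }
  norm_map' := fun f => by
    simp only [LinearMap.coe_mk, AddHom.coe_mk]
    rw [lp.norm_eq_tsum_rpow (by norm_num) f,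
      lp.norm_eq_tsum_rpow (by norm_num) _]
    congr 1
    exact (Equiv.mulRight g⁻¹).tsum_eq fun x => ‖f x‖ ^ (2 : ℝ≥0∞).toReal

/-- Right translation as a continuous linear map. -/
noncomputable def rho (g : G) :
    lp (fun _ : G => ℂ) 2 →L[ℂ] lp (fun _ : G => ℂ) 2 :=
  (rhoLI g).toContinuousLinearMap

lemma rho_apply (g : G) (f : lp (fun _ : G => ℂ) 2) (x : G) :
    rho g f x = f (x * g⁻¹) := rfl

lemma rho_single (g η : G) (c : ℂ) :
    rho g (lp.single 2 η c) = lp.single 2 (η * g) c := by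
  apply lp.ext
  funext x
  rw [rho_apply, lp.single_apply, lp.single_apply]
  by_cases h : x = η * g
  · rw [Pi.single_apply, Pi.single_apply, if_pos (show x * g⁻¹ = η by rw [h]; group), if_pos h]
  · rw [Pi.single_apply, Pi.single_apply, if_neg (show ¬ x * g⁻¹ = η from fun hc => h (by rw [← hc]; group)), if_neg h]

lemma star_rho (g : G) : star (rho g) = rho g⁻¹ := by
  rw [ContinuousLinearMap.star_eq_adjoint]
  symm
  rw [ContinuousLinearMap.eq_adjoint_iff]
  intro x y
  refine (lp.hasSum_inner (𝕜 := ℂ) (rho g⁻¹ x) y).unique ?_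
  have h2 := (Equiv.mulRight g).hasSum_iff.2 (lp.hasSum_inner (𝕜 := ℂ) x (rho g y))
  refine h2.congr_fun fun t => ?_
  simp [rho_apply, mul_inv_cancel_right]

lemma comm_of_mem (lam : G → (lp (fun _ : G => ℂ) 2 →L[ℂ] lp (fun _ : G => ℂ) 2))
    (hlam : ∀ (g : G) (f : lp (fun _ : G => ℂ) 2) (x : G), lam g f x = f (g⁻¹ * x))
    {a : lp (fun _ : G => ℂ) 2 →L[ℂ] lp (fun _ : G => ℂ) 2}
    (ha : a ∈ reducedGroupCStarAlgebra lam) (g : G) : a * rho g = rho g * a := by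
  suffices h : a ∈ {a : lp (fun _ : G => ℂ) 2 →L[ℂ] lp (fun _ : G => ℂ) 2 |
      ∀ g, a * rho g = rho g * a} from h g
  have hclosed : IsClosed {a : lp (fun _ : G => ℂ) 2 →L[ℂ] lp (fun _ : G => ℂ) 2 |
      ∀ g, a * rho g = rho g * a} := by
    simp only [Set.setOf_forall]
    exact isClosed_iInter fun g =>
      isClosed_eq (continuous_mul_right _) (continuous_mul_left _)
  have hsub : (↑(StarAlgebra.adjoin ℂ (Set.range lam)) : Set (lp (fun _ : G => ℂ) 2 →L[ℂ] lp (fun _ : G => ℂ) 2)) ⊆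
      {a | ∀ g, a * rho g = rho g * a} := by
    intro x hx
    induction hx using StarAlgebra.adjoin_induction with
    | mem x hx =>
      obtain ⟨g', rfl⟩ := hx
      intro g
      ext f x
      simp only [ContinuousLinearMap.mul_apply]
      rw [hlam, rho_apply, rho_apply, hlam, mul_assoc]
    | algebraMap r => exact fun g => Algebra.commutes r (rho g)
    | add x y hx hy ihx ihy => intro g; rw [add_mul, mul_add, ihx g, ihy g]
    | mul x y hx hy ihx ihy =>
      intro g; rw [mul_assoc, ihy g, ← mul_assoc, ihx g, mul_assoc]
    | star x hx ih =>
      intro g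
      have h1 := congrArg star (ih g⁻¹)
      rw [star_mul, star_mul, star_rho, inv_inv] at h1
      exact h1.symm
  exact closure_minimal hsub hclosed ha

lemma jmap_eq (a : lp (fun _ : G => ℂ) 2 →L[ℂ] lp (fun _ : G => ℂ) 2) (γ : G) :
    jmap a γ = a (lp.single 2 (1 : G) (1 : ℂ)) γ := by
  rw [jmap, lp.inner_single_left]
  simp [RCLike.inner_apply]

lemma key (a : lp (fun _ : G => ℂ) 2 →L[ℂ] lp (fun _ : G => ℂ) 2)
    (ha : ∀ g, a * rho g = rho g * a) (f : lp (fun _ : G => ℂ) 2) (γ : G) :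
    HasSum (fun η : G => a (lp.single 2 (1 : G) (1 : ℂ)) η * f (η⁻¹ * γ)) (a f γ) := by
  set u := a (lp.single 2 (1 : G) (1 : ℂ)) with hu
  have h1 : HasSum (fun η : G => lp.single 2 η (f η)) f :=
    lp.hasSum_single (by norm_num) f
  have h2 : HasSum (fun η : G => a (lp.single 2 η (f η))) (a f) := h1.mapL a
  have h3 : HasSum (fun η : G => (a (lp.single 2 η (f η))) γ) (a f γ) := by
    have h3' := h2.mapL (innerSL ℂ (lp.single 2 γ (1 : ℂ)))
    simpa [lp.inner_single_left, RCLike.inner_apply] using h3'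
  have h4 : ∀ η : G, (a (lp.single 2 η (f η))) γ = f η * u (γ * η⁻¹) := by
    intro η
    have e1 : lp.single 2 η (f η) = f η • (lp.single 2 η (1 : ℂ) : lp (fun _ : G => ℂ) 2) := by
      rw [← lp.single_smul]; simp
    have e2 : a (lp.single 2 η (1 : ℂ)) = rho η u := by
      have e3 : lp.single 2 η (1 : ℂ) = rho η (lp.single 2 (1 : G) (1 : ℂ)) := by
        rw [rho_single, one_mul]
      rw [e3]
      exact congrArg (fun T : lp (fun _ : G => ℂ) 2 →L[ℂ] lp (fun _ : G => ℂ) 2 =>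
        T (lp.single 2 (1 : G) (1 : ℂ))) (ha η)
    rw [e1, map_smul, e2]
    rw [lp.coeFn_smul]
    simp [rho_apply, smul_eq_mul]
  simp only [h4] at h3
  have e : G ≃ G := (Equiv.inv G).trans (Equiv.mulRight γ)
  have h6 := ((Equiv.inv G).trans (Equiv.mulRight γ)).hasSum_iff.2 h3
  refine h6.congr_fun fun η => ?_
  show u η * f (η⁻¹ * γ) = f (η⁻¹ * γ) * u (γ * (η⁻¹ * γ)⁻¹)
  rw [mul_comm]
  congr 1
  group

end JmapAux

/-- The convolution formula for Renault's `j`-map on the reduced group C*-algebra of a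
countable discrete group: for `a, b ∈ C*_r(G)` and `γ ∈ G`, the family
`η ↦ j(a)(η) · j(b)(η⁻¹γ)` is unconditionally summable with sum `j(ab)(γ)`,
where `a * b` is composition of operators. -/
theorem jmap_mul {G : Type*} [Group G] [Countable G] [DecidableEq G]
    (lam : G → (lp (fun _ : G => ℂ) 2 →L[ℂ] lp (fun _ : G => ℂ) 2))
    (hlam : ∀ (g : G) (f : lp (fun _ : G => ℂ) 2) (x : G), lam g f x = f (g⁻¹ * x)) :
    ∀ a ∈ reducedGroupCStarAlgebra lam, ∀ b ∈ reducedGroupCStarAlgebra lam, ∀ γ : G,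
      HasSum (fun η : G => jmap a η * jmap b (η⁻¹ * γ)) (jmap (a * b) γ) := by
  intro a ha b _ γ
  have hc := fun g => JmapAux.comm_of_mem lam hlam ha g
  have hkey := JmapAux.key a hc (b (lp.single 2 (1 : G) (1 : ℂ))) γ
  simp only [JmapAux.jmap_eq]
  exact hkey
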